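/- For 1 ≤ k < ℓ and q ∈ ℂ^× with q² a primitive ℓ-th root of unity, and t, z ∈ ℂ^× satisfying q^t z² = 1, the alternating sum ∑_{i=1}^{k+1} (-1)^i q^{(k+1)i} [k choose i-1]_q equals -q^{k+1}·∏_{i=1}^{k} (1 - q^{2i}), which is nonzero. (The equality of the sum with the product holds for any q with q² ≠ 1; the nonvanishing uses that q² is a primitive ℓ-th root of unity and k < ℓ.) -/

import Mathlib

/-- The (balanced) q-number `[k]_q = (q^k - q^{-k})/(q - q⁻¹)`. -/
noncomputable def qNum (q : ℂ) (k : ℤ) : ℂ := (q ^ k - q ^ (-k)) / (q - q⁻¹)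

/-- The q-factorial `[n]_q!`. -/
noncomputable def qFact (q : ℂ) : ℕ → ℂ
  | 0 => 1
  | n + 1 => qNum q ((n : ℤ) + 1) * qFact q n

/-- The q-binomial coefficient. -/
noncomputable def qBinom (q : ℂ) (m n : ℤ) : ℂ :=
  if 0 ≤ n ∧ n ≤ m then qFact q m.toNat / (qFact q n.toNat * qFact q (m - n).toNat) else 0

namespace KeyAux

/-- Gaussian binomial coefficient in base `q²`, defined via the Pascal recursion
`C(n+1, j+1) = q^{2(n-j)} C(n,j) + C(n,j+1)`. -/
noncomputable def gb (q : ℂ) : ℕ → ℕ → ℂ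
  | 0, 0 => 1
  | 0, _ + 1 => 0
  | _ + 1, 0 => 1
  | n + 1, j + 1 => q ^ (2 * (n - j)) * gb q n j + gb q n (j + 1)

lemma gb_zero_right (q : ℂ) (n : ℕ) : gb q n 0 = 1 := by cases n <;> rfl

lemma gb_eq_zero (q : ℂ) : ∀ n j, n < j → gb q n j = 0
  | 0, _ + 1, _ => rfl
  | n + 1, j + 1, h => by
      rw [gb, gb_eq_zero q n j (by omega), gb_eq_zero q n (j + 1) (by omega)]
      ring

lemma gb_diag (q : ℂ) : ∀ n, gb q n n = 1
  | 0 => rfl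
  | n + 1 => by
      rw [gb, gb_diag q n, gb_eq_zero q n (n + 1) (by omega)]
      simp

/-- The key alternating-sum identity for Gaussian binomials (a form of the
`q`-binomial theorem specialized at `x = -q²`). -/
lemma gb_sum (q : ℂ) (n : ℕ) :
    ∑ j ∈ Finset.range (n + 1), (-1 : ℂ) ^ j * q ^ (j * (j + 1)) * gb q n j =
      ∏ i ∈ Finset.Icc 1 n, (1 - q ^ (2 * i)) := by
  induction n with
  | zero => simp [gb]
  | succ n ih =>
    have hpt : ∀ j ∈ Finset.range (n + 1),
        (-1 : ℂ) ^ (j + 1) * q ^ ((j + 1) * ((j + 1) + 1)) * gb q (n + 1) (j + 1) =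
          -q ^ (2 * (n + 1)) * ((-1) ^ j * q ^ (j * (j + 1)) * gb q n j) +
            (-1) ^ (j + 1) * q ^ ((j + 1) * ((j + 1) + 1)) * gb q n (j + 1) := by
      intro j hj
      obtain ⟨d, rfl⟩ := Nat.exists_eq_add_of_le (Nat.lt_succ_iff.mp (Finset.mem_range.mp hj))
      rw [gb, show j + d - j = d from by omega]
      ring
    rw [Finset.sum_range_succ' _ (n + 1), Finset.sum_congr rfl hpt,
      Finset.sum_add_distrib, ← Finset.mul_sum, ih,
      Finset.prod_Icc_succ_top (by omega : 1 ≤ n + 1)]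
    have h2 : ∑ j ∈ Finset.range (n + 1),
        (-1 : ℂ) ^ (j + 1) * q ^ ((j + 1) * ((j + 1) + 1)) * gb q n (j + 1) =
        (∑ j ∈ Finset.range (n + 1 + 1), (-1 : ℂ) ^ j * q ^ (j * (j + 1)) * gb q n j) - 1 := by
      rw [Finset.sum_range_succ' (fun j => (-1 : ℂ) ^ j * q ^ (j * (j + 1)) * gb q n j) (n + 1)]
      simp [gb_zero_right]
    rw [h2, Finset.sum_range_succ, ih, gb_eq_zero q n (n + 1) (by omega),
      gb_zero_right]
    ring

def tri (n : ℕ) : ℕ := ∑ i ∈ Finset.range (n + 1), i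

lemma tri_succ (n : ℕ) : tri (n + 1) = tri n + (n + 1) := Finset.sum_range_succ _ _

lemma tri_mul_two (n : ℕ) : tri n * 2 = (n + 1) * n := by
  simpa [tri] using Finset.sum_range_id_mul_two (n + 1)

lemma tri_add (j d : ℕ) : tri j + tri d + j * d = tri (j + d) := by
  apply Nat.eq_of_mul_eq_mul_right (show 0 < 2 by norm_num)
  rw [add_mul, add_mul, tri_mul_two, tri_mul_two, tri_mul_two]
  ring

lemma qNum_nat (q : ℂ) (hq0 : q ≠ 0) (hQ1 : q ^ 2 ≠ 1) (n : ℕ) :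
    qNum q (n : ℤ) * ((q ^ 2 - 1) * q ^ n) = q * (q ^ (2 * n) - 1) := by
  have hden : q - q⁻¹ ≠ 0 := by
    intro h
    apply hQ1
    have h' := sub_eq_zero.mp h
    rw [sq]
    nth_rewrite 1 [h']
    exact inv_mul_cancel₀ hq0
  rw [qNum, zpow_neg, zpow_natCast, div_mul_eq_mul_div, div_eq_iff hden]
  field_simp
  ring

lemma qFact_formula (q : ℂ) (hq0 : q ≠ 0) (hQ1 : q ^ 2 ≠ 1) (n : ℕ) :
    qFact q n * ((q ^ 2 - 1) ^ n * q ^ tri n) =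
      (-1) ^ n * q ^ n * ∏ i ∈ Finset.Icc 1 n, (1 - q ^ (2 * i)) := by
  induction n with
  | zero => simp [qFact, tri]
  | succ n ih =>
    have hA := qNum_nat q hq0 hQ1 (n + 1)
    push_cast at hA
    have hdef : qFact q (n + 1) = qNum q ((n : ℤ) + 1) * qFact q n := rfl
    rw [hdef, tri_succ, Finset.prod_Icc_succ_top (by omega : 1 ≤ n + 1)]
    calc qNum q ((n : ℤ) + 1) * qFact q n * ((q ^ 2 - 1) ^ (n + 1) * q ^ (tri n + (n + 1)))
        = (qNum q ((n : ℤ) + 1) * ((q ^ 2 - 1) * q ^ (n + 1))) *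
            (qFact q n * ((q ^ 2 - 1) ^ n * q ^ tri n)) := by ring
      _ = (q * (q ^ (2 * (n + 1)) - 1)) *
            ((-1) ^ n * q ^ n * ∏ i ∈ Finset.Icc 1 n, (1 - q ^ (2 * i))) := by rw [hA, ih]
      _ = (-1) ^ (n + 1) * q ^ (n + 1) *
            ((∏ i ∈ Finset.Icc 1 n, (1 - q ^ (2 * i))) * (1 - q ^ (2 * (n + 1)))) := by ring

/-- Relation between `gb` and the products `P m = ∏_{i=1}^m (1 - q^{2i})`. -/
lemma gb_mul (q : ℂ) : ∀ n, ∀ j ≤ n,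
    gb q n j * ((∏ i ∈ Finset.Icc 1 j, (1 - q ^ (2 * i))) *
        ∏ i ∈ Finset.Icc 1 (n - j), (1 - q ^ (2 * i))) =
      ∏ i ∈ Finset.Icc 1 n, (1 - q ^ (2 * i)) := by
  intro n
  induction n with
  | zero => intro j hj; interval_cases j; simp [gb]
  | succ n ih =>
    intro j hj
    match j, hj with
    | 0, _ => simp [gb_zero_right]
    | j + 1, hj =>
      rcases Nat.lt_or_ge j n with hjn | hjn
      · -- j + 1 ≤ n
        obtain ⟨e, he⟩ : ∃ e, n = j + 1 + e := ⟨n - (j + 1), by omega⟩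
        subst he
        have h1 := ih j (by omega)
        have h2 := ih (j + 1) (by omega)
        rw [show j + 1 + e - j = e + 1 from by omega] at h1
        rw [show j + 1 + e - (j + 1) = e from by omega] at h2
        rw [gb, show j + 1 + e - j = e + 1 from by omega,
          show j + 1 + e + 1 - (j + 1) = e + 1 from by omega]
        rw [Finset.prod_Icc_succ_top (by omega : 1 ≤ j + 1) (fun i => 1 - q ^ (2 * i))] at h2 ⊢
        rw [Finset.prod_Icc_succ_top (by omega : 1 ≤ e + 1) (fun i => 1 - q ^ (2 * i))] at h1 ⊢
        rw [show j + 1 + e + 1 = (j + 1 + e) + 1 from rfl,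
          Finset.prod_Icc_succ_top (by omega : 1 ≤ j + 1 + e + 1) (fun i => 1 - q ^ (2 * i))]
        linear_combination (q ^ (2 * (e + 1)) * (1 - q ^ (2 * (j + 1)))) * h1 +
          (1 - q ^ (2 * (e + 1))) * h2
      · -- j = n
        have hj' : j = n := by omega
        subst hj'
        rw [gb_diag, show j + 1 - (j + 1) = 0 from by omega]
        simp
end KeyAux

open KeyAux in
/-- For `1 ≤ k < ℓ`, `q²` a primitive `ℓ`-th root of unity and `t, z` with `q^t z² = 1`,
`∑_{i=1}^{k+1} (-1)^i q^{(k+1)i} [k choose i-1]_q = -q^{k+1} ∏_{i=1}^{k} (1 - q^{2i}) ≠ 0`. -/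
theorem key_alternating_sum (q z : ℂ) (ℓ k : ℕ) (t : ℤ)
    (hq0 : q ≠ 0) (hz : z ≠ 0) (hq : IsPrimitiveRoot (q ^ 2) ℓ)
    (hk1 : 1 ≤ k) (hkℓ : k < ℓ) (htz : q ^ t * z ^ 2 = 1) :
    (∑ i ∈ Finset.Icc 1 (k + 1),
        (-1 : ℂ) ^ i * q ^ ((k + 1) * i) * qBinom q (k : ℤ) ((i : ℤ) - 1) =
      -q ^ (k + 1) * ∏ i ∈ Finset.Icc 1 k, (1 - q ^ (2 * i))) ∧
    -q ^ (k + 1) * ∏ i ∈ Finset.Icc 1 k, (1 - q ^ (2 * i)) ≠ 0 := by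
  -- basic nonvanishing facts
  have hℓ2 : 2 ≤ ℓ := by omega
  have hQ1 : q ^ 2 ≠ 1 := hq.ne_one hℓ2
  have hpow : ∀ i, 1 ≤ i → i < ℓ → q ^ (2 * i) ≠ 1 := by
    intro i h1 h2
    have := hq.pow_ne_one_of_pos_of_lt (by omega : i ≠ 0) h2
    rwa [← pow_mul] at this
  have hPne : ∀ m ≤ k, (∏ i ∈ Finset.Icc 1 m, (1 - q ^ (2 * i))) ≠ 0 := by
    intro m hm
    apply Finset.prod_ne_zero_iff.mpr
    intro i hi
    rw [Finset.mem_Icc] at hi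
    exact sub_ne_zero.mpr (Ne.symm (hpow i hi.1 (by omega)))
  have hFne : ∀ m ≤ k, qFact q m ≠ 0 := by
    intro m hm
    have h := qFact_formula q hq0 hQ1 m
    intro h0
    rw [h0, zero_mul] at h
    exact mul_ne_zero (mul_ne_zero (pow_ne_zero m (by norm_num : (-1 : ℂ) ≠ 0))
      (pow_ne_zero m hq0)) (hPne m hm) h.symm
  -- the q-binomial in terms of `gb`
  have hqb : ∀ j ≤ k, qBinom q (k : ℤ) (j : ℤ) * q ^ (j * (k - j)) = gb q k j := by
    intro j hjk
    obtain ⟨d, rfl⟩ := Nat.exists_eq_add_of_le hjk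
    have hcond : (0 : ℤ) ≤ (j : ℤ) ∧ (j : ℤ) ≤ ((j + d : ℕ) : ℤ) := by
      constructor <;> [positivity; exact_mod_cast Nat.le_add_right j d]
    rw [qBinom, if_pos hcond]
    have ht1 : ((j : ℤ)).toNat = j := Int.toNat_natCast j
    have ht2 : (((j + d : ℕ) : ℤ)).toNat = j + d := Int.toNat_natCast _
    have ht3 : (((j + d : ℕ) : ℤ) - (j : ℤ)).toNat = d := by push_cast; omega
    rw [ht1, ht2, ht3, show j + d - j = d from by omega]
    -- now prove qFact (j+d) / (qFact j * qFact d) * q^(j*d) = gb q (j+d) j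
    have h1 := qFact_formula q hq0 hQ1 (j + d)
    have h2 := qFact_formula q hq0 hQ1 j
    have h3 := qFact_formula q hq0 hQ1 d
    rw [← tri_add j d] at h1
    have hgb := gb_mul q (j + d) j (Nat.le_add_right j d)
    rw [show j + d - j = d from by omega] at hgb
    have hFj := hFne j (by omega)
    have hFd := hFne d (by omega)
    have hPj := hPne j (by omega)
    have hPd := hPne d (by omega)
    rw [div_mul_eq_mul_div, div_eq_iff (mul_ne_zero hFj hFd)]
    -- cancel a common nonzero factor
    apply mul_right_cancel₀ (show ((q ^ 2 - 1) ^ (j + d) * q ^ (tri j + tri d + j * d) *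
      ((∏ i ∈ Finset.Icc 1 j, (1 - q ^ (2 * i))) *
        ∏ i ∈ Finset.Icc 1 d, (1 - q ^ (2 * i))) : ℂ) ≠ 0 from
      mul_ne_zero (mul_ne_zero (pow_ne_zero _ (sub_ne_zero.mpr hQ1)) (pow_ne_zero _ hq0))
        (mul_ne_zero hPj hPd))
    linear_combination
      (q ^ (j * d) * (∏ i ∈ Finset.Icc 1 j, (1 - q ^ (2 * i))) *
        (∏ i ∈ Finset.Icc 1 d, (1 - q ^ (2 * i)))) * h1 -
      (gb q (j + d) j * (qFact q d * ((q ^ 2 - 1) ^ d * q ^ tri d)) * (q ^ (j * d) *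
        (∏ i ∈ Finset.Icc 1 j, (1 - q ^ (2 * i))) *
        (∏ i ∈ Finset.Icc 1 d, (1 - q ^ (2 * i))))) * h2 -
      (gb q (j + d) j * ((-1) ^ j * q ^ j * (∏ i ∈ Finset.Icc 1 j, (1 - q ^ (2 * i)))) *
        (q ^ (j * d) * (∏ i ∈ Finset.Icc 1 j, (1 - q ^ (2 * i))) *
        (∏ i ∈ Finset.Icc 1 d, (1 - q ^ (2 * i))))) * h3 -
      (q ^ (j * d) * (∏ i ∈ Finset.Icc 1 j, (1 - q ^ (2 * i))) *
        (∏ i ∈ Finset.Icc 1 d, (1 - q ^ (2 * i))) * (-1) ^ (j + d) * q ^ (j + d)) * hgb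
  constructor
  · -- the sum identity
    rw [show Finset.Icc 1 (k + 1) = Finset.Ico 1 (k + 1 + 1) from (Finset.Ico_add_one_right_eq_Icc 1 (k+1)).symm,
      Finset.sum_Ico_eq_sum_range]
    rw [show k + 1 + 1 - 1 = k + 1 from by omega]
    have hpt : ∀ j ∈ Finset.range (k + 1),
        (-1 : ℂ) ^ (1 + j) * q ^ ((k + 1) * (1 + j)) * qBinom q (k : ℤ) (((1 + j : ℕ) : ℤ) - 1) =
          -q ^ (k + 1) * ((-1) ^ j * q ^ (j * (j + 1)) * gb q k j) := by
      intro j hj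
      have hjk : j ≤ k := Nat.lt_succ_iff.mp (Finset.mem_range.mp hj)
      have hcast : ((1 + j : ℕ) : ℤ) - 1 = (j : ℤ) := by push_cast; ring
      rw [hcast, ← hqb j hjk]
      obtain ⟨d, rfl⟩ := Nat.exists_eq_add_of_le hjk
      rw [show j + d - j = d from by omega]
      ring
    rw [Finset.sum_congr rfl hpt, ← Finset.mul_sum, gb_sum]
  · exact mul_ne_zero (neg_ne_zero.mpr (pow_ne_zero _ hq0)) (hPne k le_rfl)
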